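/- Define on pairs of an even and odd polynomial generators the star product f ⋆ g = fg + {f, κg} where κ is an odd formal parameter with κ² = 0 and {·,·} is the canonical odd (Buttin) bracket on ℝ[x,ξ] (ξ odd, ξ²=0) given by {ξ,x} = 1, {x,x} = {ξ,ξ} = 0, extended by the graded Leibniz rules. Then ⋆ is supercommutative: f ⋆ g = (−1)^{|f||g|} g ⋆ f for homogeneous f, g. -/

import Mathlib

theorem stmt9 :
    let P := Polynomial ℝ
    -- (comp. of 1, ξ, κ, ξκ) of the star product of a+bξ and c+dξ
    let star : P × P → P × P → P × P × P × P := fun f g =>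
      (f.1 * g.1, f.1 * g.2 + f.2 * g.1,
        (Polynomial.derivative f.1) * g.2 + f.2 * (Polynomial.derivative g.1),
        (Polynomial.derivative f.2) * g.2 - f.2 * (Polynomial.derivative g.2))
    ∀ (f g : P × P) (pf pg : ℕ),
      ((pf = 0 ∧ f.2 = 0) ∨ (pf = 1 ∧ f.1 = 0)) →
      ((pg = 0 ∧ g.2 = 0) ∨ (pg = 1 ∧ g.1 = 0)) →
      star f g = ((-1 : ℤ) ^ (pf * pg)) • star g f := by
  intro P star f g pf pg hf hg
  rcases hf with ⟨hp, h1⟩ | ⟨hp, h1⟩ <;> rcases hg with ⟨hq, h2⟩ | ⟨hq, h2⟩ <;>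
    subst hp hq <;> simp only [star, h1, h2, Prod.mk.injEq, Prod.smul_mk] <;>
    simp <;> (try ring_nf) <;> simp [mul_comm]
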